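/- Let R be a commutative ring, p ⊆ R a finitely generated maximal ideal with R_p a principal ideal ring, and m ≥ 1. If M is an R/p^m-module such that every x ∈ M with p^{m-1}x = 0 lies in pM, then M is a free R/p^m-module. -/

import Mathlib

universe u

open Submodule

theorem free_aux {A : Type u} [CommRing A] (π : A) (m : ℕ) (hm : 1 ≤ m)
    (hmax : (Ideal.span {π} : Ideal A).IsMaximal) (hnil : π ^ m = 0)
    (M : Type u) [AddCommGroup M] [Module A M]
    (htor : ∀ x : M, π ^ (m - 1) • x = 0 →
      x ∈ (Ideal.span {π} : Ideal A) • (⊤ : Submodule A M)) :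
    Module.Free A M := by
  set 𝔪 : Ideal A := Ideal.span {π} with h𝔪
  have h𝔪m : 𝔪 ^ m = ⊥ := by
    rw [h𝔪, Ideal.span_singleton_pow, hnil, Ideal.span_singleton_eq_bot.mpr rfl]
  -- residue field and basis of M/𝔪M
  letI : Field (A ⧸ 𝔪) := Ideal.Quotient.field 𝔪
  set N := M ⧸ (𝔪 • ⊤ : Submodule A M)
  let b := Module.Basis.ofVectorSpace (A ⧸ 𝔪) N
  set ι := Module.Basis.ofVectorSpaceIndex (A ⧸ 𝔪) N
  -- lift basis vectors
  have hsurj : ∀ n : N, ∃ x : M, Submodule.Quotient.mk x = n :=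
    fun n => Submodule.Quotient.mk_surjective _ n
  choose v hv using fun i : ι => hsurj (b i)
  -- spanning
  have hspan : ⊤ ≤ span A (Set.range v) := by
    set N₀ := span A (Set.range v)
    have step : ⊤ ≤ N₀ ⊔ 𝔪 • ⊤ := by
      intro x _
      have hx : (Submodule.Quotient.mk x : N) ∈ span (A ⧸ 𝔪) (Set.range b) := by
        rw [b.span_eq]; trivial
      obtain ⟨c, hc⟩ := Finsupp.mem_span_range_iff_exists_finsupp.mp hx
      obtain ⟨d, hd⟩ := Finsupp.mapRange_surjective (Ideal.Quotient.mk 𝔪) (map_zero _)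
        Ideal.Quotient.mk_surjective c
      have key : Submodule.Quotient.mk (d.sum fun i a => a • v i) =
          (Submodule.Quotient.mk x : N) := by
        rw [← hc, ← hd, Finsupp.sum_mapRange_index (by simp), Finsupp.sum, Finsupp.sum,
          show (Submodule.Quotient.mk : M → N) = (𝔪 • ⊤ : Submodule A M).mkQ from rfl,
          map_sum]
        exact Finset.sum_congr rfl fun i _ => by
          rw [Submodule.mkQ_apply, ← hv i, Module.Quotient.mk_smul_mk]
      have : x - d.sum (fun i a => a • v i) ∈ (𝔪 • ⊤ : Submodule A M) := by
        rw [← Submodule.Quotient.mk_eq_zero]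
        simp [Submodule.Quotient.mk_sub, key]
      refine Submodule.mem_sup.mpr ⟨d.sum fun i a => a • v i, ?_, _, this, by abel⟩
      exact Submodule.sum_mem _ fun i _ => Submodule.smul_mem _ _
        (Submodule.subset_span ⟨i, rfl⟩)
    have main : ∀ j : ℕ, ⊤ ≤ N₀ ⊔ 𝔪 ^ j • ⊤ := by
      intro j
      induction j with
      | zero => simpa using step.trans (sup_le_sup_left (Submodule.smul_le_right) _)
      | succ j ih =>
        refine ih.trans ?_
        have h2 : (𝔪 ^ j • ⊤ : Submodule A M) ≤ N₀ ⊔ 𝔪 ^ (j + 1) • ⊤ :=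
          calc (𝔪 ^ j • ⊤ : Submodule A M) ≤ 𝔪 ^ j • (N₀ ⊔ 𝔪 • ⊤) :=
                smul_mono_right _ step
            _ = 𝔪 ^ j • N₀ ⊔ 𝔪 ^ j • (𝔪 • ⊤) := Submodule.smul_sup _ _ _
            _ ≤ N₀ ⊔ 𝔪 ^ (j + 1) • ⊤ := by
                refine sup_le_sup Submodule.smul_le_right ?_
                rw [pow_succ]
                exact le_of_eq (by rw [← smul_eq_mul, Submodule.smul_assoc])
        exact sup_le le_sup_left h2
    have := main m
    rwa [h𝔪m, Submodule.bot_smul, sup_bot_eq] at this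
  have hli : LinearIndependent A v := by
    rw [linearIndependent_iff]
    intro l hl
    have key : ∀ k : ℕ, k ≤ m → ∀ i, l i ∈ 𝔪 ^ k := by
      intro k
      induction k with
      | zero => intro _ i; simp
      | succ k ihk =>
        intro hk1 i
        have hk : ∀ j, l j ∈ 𝔪 ^ k := ihk (by omega)
        have hmem : ∀ j, ∃ a : A, a * π ^ k = l j := fun j =>
          Ideal.mem_span_singleton'.mp (by
            rw [← Ideal.span_singleton_pow, ← h𝔪]; exact hk j)
        choose c hc using hmem
        set y : M := ∑ j ∈ l.support, c j • v j with hy_def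
        have hpy : π ^ k • y = 0 := by
          rw [hy_def, Finset.smul_sum]
          have heq : ∀ j ∈ l.support, π ^ k • c j • v j = l j • v j := fun j _ => by
            rw [smul_smul, mul_comm, hc]
          rw [Finset.sum_congr rfl heq]
          have h3 : (l.sum fun j a => a • v j) = 0 := by
            rw [← Finsupp.linearCombination_apply]; exact hl
          exact h3
        have hty : π ^ (m - 1) • y = 0 := by
          have hk2 : k ≤ m - 1 := by omega
          rw [← Nat.sub_add_cancel hk2, pow_add, mul_smul, hpy, smul_zero]
        have hq : (Submodule.Quotient.mk y : N) = 0 :=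
          (Submodule.Quotient.mk_eq_zero _).mpr (htor y hty)
        have hq2 : ∑ j ∈ l.support, (Ideal.Quotient.mk 𝔪 (c j)) • b j = 0 := by
          rw [← hq, hy_def,
            show (Submodule.Quotient.mk : M → N) = (𝔪 • ⊤ : Submodule A M).mkQ from rfl,
            map_sum]
          exact Finset.sum_congr rfl fun j _ => by
            rw [Submodule.mkQ_apply, ← hv j, Module.Quotient.mk_smul_mk]
        have hc0 : ∀ j ∈ l.support, Ideal.Quotient.mk 𝔪 (c j) = 0 :=
          linearIndependent_iff'.mp b.linearIndependent l.support _ hq2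
        by_cases hi : i ∈ l.support
        · have hcm : c i ∈ 𝔪 := Ideal.Quotient.eq_zero_iff_mem.mp (hc0 i hi)
          rw [← hc i, pow_succ']
          exact Ideal.mul_mem_mul hcm (Ideal.pow_mem_pow (Ideal.mem_span_singleton_self π) k)
        · rw [Finsupp.notMem_support_iff.mp hi]
          exact zero_mem _
    ext i
    have := key m le_rfl i
    rw [h𝔪m] at this
    simpa using this
  exact Module.Free.of_basis (Module.Basis.mk hli hspan)

/-- Let `p` be a finitely generated maximal ideal with `R_p` a principal ideal
ring, and `m ≥ 1`. If `M` is an `R/p^m`-module whose `p^{m-1}`-torsion is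
contained in `pM`, then `M` is a free `R/p^m`-module. -/
theorem stmt15 {R : Type u} [CommRing R] (p : Ideal R) [p.IsMaximal] (hfg : p.FG)
    (hpir : IsPrincipalIdealRing (Localization.AtPrime p))
    (m : ℕ) (hm : 1 ≤ m)
    (M : Type u) [AddCommGroup M] [Module (R ⧸ p ^ m) M]
    (hM : ∀ x : M, (∀ a ∈ p ^ (m - 1), (Ideal.Quotient.mk (p ^ m) a) • x = 0) →
      x ∈ (p.map (Ideal.Quotient.mk (p ^ m))) •
        (⊤ : Submodule (R ⧸ p ^ m) M)) :
    Module.Free (R ⧸ p ^ m) M := by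
  classical
  set S := Localization.AtPrime p
  set f := algebraMap R S with hf
  set mk := Ideal.Quotient.mk (p ^ m) with hmk
  -- units in the quotient
  have hunit : ∀ r : R, r ∉ p → IsUnit (mk r) := by
    intro r hr
    obtain ⟨y, i, hi, hyi⟩ := (inferInstance : p.IsMaximal).exists_inv hr
    have h1 : Ideal.span {r} ⊔ p = ⊤ := by
      rw [Ideal.eq_top_iff_one, ← hyi]
      exact add_mem (Ideal.mem_sup_left (Ideal.mem_span_singleton'.mpr ⟨y, rfl⟩))
        (Ideal.mem_sup_right hi)
    have h2 : Ideal.span {r} ⊔ p ^ m = ⊤ := Ideal.sup_pow_eq_top h1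
    rw [Ideal.eq_top_iff_one] at h2
    obtain ⟨w, hw, q, hq, hwq⟩ := Submodule.mem_sup.mp h2
    obtain ⟨c, hc⟩ := Ideal.mem_span_singleton'.mp hw
    refine IsUnit.of_mul_eq_one (mk c) ?_
    rw [← map_mul, ← map_one mk]
    rw [← hwq, ← hc]
    rw [map_add, map_mul, map_mul]
    rw [Ideal.Quotient.eq_zero_iff_mem.mpr hq]
    ring
  -- a generator a ∈ p of p S
  obtain ⟨a, s, ha, hgen⟩ : ∃ (a : R) (s : p.primeCompl), a ∈ p ∧
      Ideal.span {f a} = p.map f := by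
    obtain ⟨g, hg⟩ := (hpir.principal (p.map f)).principal
    obtain ⟨⟨a, s⟩, hs⟩ := IsLocalization.surj p.primeCompl g
    refine ⟨a, s, ?_, ?_⟩
    · have hfa : f a ∈ p.map f := by
        rw [← hs, hg]
        exact Ideal.mul_mem_right _ _ (Ideal.subset_span rfl)
      have hcomap : Ideal.comap f (p.map f) = p := by
        rw [Localization.AtPrime.map_eq_maximalIdeal]
        exact Localization.AtPrime.comap_maximalIdeal
      rw [← hcomap]; exact hfa
    · rw [← hs, Ideal.span_singleton_mul_right_unit (IsLocalization.map_units S s), hg]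
  set π := mk a with hπ
  -- span
  have hspan𝔪 : p.map mk = Ideal.span {π} := by
    apply le_antisymm
    · rw [Ideal.map_le_iff_le_comap]
      intro y hy
      have h1 : f y ∈ Ideal.span {f a} := by rw [hgen]; exact Ideal.mem_map_of_mem f hy
      obtain ⟨cS, hcS⟩ := Ideal.mem_span_singleton'.mp h1
      obtain ⟨⟨bR, t⟩, hbt⟩ := IsLocalization.surj p.primeCompl cS
      have h3 : f (y * ↑t - bR * a) = 0 := by
        rw [map_sub, map_mul, map_mul, ← hcS, ← hbt]; ring
      obtain ⟨u, hu⟩ := (IsLocalization.map_eq_zero_iff p.primeCompl S _).mp h3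
      have h4 : (↑u * ↑t) * y = (↑u * bR) * a := by linear_combination hu
      have hut : (↑u * ↑t : R) ∉ p := mul_mem u.2 t.2
      obtain ⟨w, hw⟩ := hunit _ hut
      have h5 : (w : R ⧸ p ^ m) * mk y = mk (↑u * bR) * π := by
        rw [hw, hπ, ← map_mul, ← map_mul, h4]
      rw [Ideal.mem_comap]
      refine Ideal.mem_span_singleton.mpr ⟨(↑w⁻¹ : R ⧸ p ^ m) * mk (↑u * bR), ?_⟩
      calc mk y = (↑w⁻¹ * ↑w : R ⧸ p ^ m) * mk y := by rw [w.inv_mul, one_mul]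
        _ = ↑w⁻¹ * ((w : R ⧸ p ^ m) * mk y) := by ring
        _ = ↑w⁻¹ * (mk (↑u * bR) * π) := by rw [h5]
        _ = π * (↑w⁻¹ * mk (↑u * bR)) := by ring
    · rw [Ideal.span_le, Set.singleton_subset_iff]
      exact Ideal.mem_map_of_mem mk ha
  -- maximality
  have hmax : (Ideal.span {π} : Ideal (R ⧸ p ^ m)).IsMaximal := by
    rw [← hspan𝔪]
    rcases Ideal.map_eq_top_or_isMaximal_of_surjective mk Ideal.Quotient.mk_surjective
      (inferInstance : p.IsMaximal) with h | h
    · exfalso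
      have := Ideal.comap_map_of_surjective mk Ideal.Quotient.mk_surjective p
      rw [h, Ideal.comap_top] at this
      have hker : Ideal.comap mk (⊥ : Ideal (R ⧸ p ^ m)) = p ^ m := by
        ext z; simp [hmk, Ideal.Quotient.eq_zero_iff_mem]
      rw [hker, sup_eq_left.mpr (Ideal.pow_le_self (by omega))] at this
      exact (inferInstance : p.IsMaximal).ne_top this.symm
    · exact h
  -- nilpotency
  have hnil : π ^ m = 0 := by
    rw [hπ, ← map_pow, Ideal.Quotient.eq_zero_iff_mem]
    exact Ideal.pow_mem_pow ha m
  -- torsion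
  have htor : ∀ x : M, π ^ (m - 1) • x = 0 →
      x ∈ (Ideal.span {π} : Ideal (R ⧸ p ^ m)) • (⊤ : Submodule (R ⧸ p ^ m) M) := by
    intro x hx
    rw [← hspan𝔪]
    refine hM x ?_
    intro aa haa
    have h1 : mk aa ∈ Ideal.span {π ^ (m - 1)} := by
      rw [← Ideal.span_singleton_pow, ← hspan𝔪, ← Ideal.map_pow]
      exact Ideal.mem_map_of_mem mk haa
    obtain ⟨cc, hcc⟩ := Ideal.mem_span_singleton'.mp h1
    rw [← hcc, mul_smul, hx, smul_zero]
  exact free_aux π m hm hmax hnil M htor
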